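/- Let f(a) = sqrt(1+a) for a ≥ 0. Then for every a ≥ 1 and every 0 < ε ≤ 1, the second-order central difference satisfies f(a+ε) + f(a-ε) - 2f(a) ≤ ε² f''(a) = -ε²/(4(1+a)^{3/2}). -/
import Mathlib


lemma aux_stmt_0 (s u e : ℝ) (hs0 : 0 ≤ s) (hu0 : 0 ≤ u)
    (h : s^2*u^2 ≤ 4*s^4 - e^2) : 4*s^3*u ≤ 8*s^4 - e^2 := by
  have h16 : 16*s^4*(s^2*u^2) ≤ 16*s^4*(4*s^4 - e^2) :=
    mul_le_mul_of_nonneg_left h (by positivity)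
  have hR0 : 0 ≤ 8*s^4 - e^2 := by nlinarith [sq_nonneg (s*u)]
  have h4 : 0 ≤ 4*s^3*u + (8*s^4 - e^2) := by positivity
  nlinarith [h16, sq_nonneg (e^2), h4]

/-- For `f a = √(1+a)`, for every `a ≥ 1` and `0 < ε ≤ 1`, the second-order
central difference satisfies
`f(a+ε) + f(a-ε) - 2 f(a) ≤ ε² f''(a) = -ε²/(4 (1+a)^{3/2})`. -/
theorem stmt_0 (a ε : ℝ) (ha : 1 ≤ a) (hε : 0 < ε) (hε1 : ε ≤ 1) :
    Real.sqrt (1 + (a + ε)) + Real.sqrt (1 + (a - ε)) - 2 * Real.sqrt (1 + a) ≤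
      -ε ^ 2 / (4 * (1 + a) ^ ((3 : ℝ) / 2)) := by
  set b : ℝ := 1 + a with hb
  have hb2 : (2:ℝ) ≤ b := by linarith
  have hb0 : (0:ℝ) ≤ b := by linarith
  set s : ℝ := Real.sqrt b with hsdef
  set p : ℝ := Real.sqrt (1 + (a + ε)) with hpdef
  set q : ℝ := Real.sqrt (1 + (a - ε)) with hqdef
  have hp2 : p ^ 2 = b + ε := by
    rw [hpdef, Real.sq_sqrt (by linarith)]; ring
  have hq2 : q ^ 2 = b - ε := by
    rw [hqdef, Real.sq_sqrt (by linarith)]; ring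
  have hs2 : s ^ 2 = b := Real.sq_sqrt hb0
  have hp0 : 0 ≤ p := Real.sqrt_nonneg _
  have hq0 : 0 ≤ q := Real.sqrt_nonneg _
  have hs0 : 0 ≤ s := Real.sqrt_nonneg _
  have hs2' : 2 ≤ s ^ 2 := by rw [hs2]; exact hb2
  have hs1 : 1 ≤ s := by nlinarith
  have hs3pos : 0 < 4 * s ^ 3 := by positivity
  have hb32 : b ^ ((3:ℝ)/2) = s ^ 3 := by
    rw [hsdef, Real.sqrt_eq_rpow, ← Real.rpow_natCast (b ^ ((1:ℝ)/2)) 3,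
      ← Real.rpow_mul hb0]
    norm_num
  -- product
  have hpq : (p * q) ^ 2 = s ^ 4 - ε ^ 2 := by
    have : (p*q)^2 = p^2 * q^2 := by ring
    rw [this, hp2, hq2]; nlinarith [hs2]
  have hpq0 : 0 ≤ p * q := mul_nonneg hp0 hq0
  -- key bound : 2 s² (pq) ≤ 2 s⁴ - ε²
  have hkey1 : 2 * s^2 * (p*q) ≤ 2 * s^4 - ε^2 := by
    nlinarith [sq_nonneg (2*s^2*(p*q) - (2*s^4 - ε^2)), sq_nonneg ε, mul_nonneg (mul_nonneg hs0 hs0) hpq0]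
  -- hence s²(p+q)² ≤ 4 s⁴ - ε²
  have hkey2 : s^2 * (p+q)^2 ≤ 4 * s^4 - ε^2 := by nlinarith [hp2, hq2, hs2]
  -- polynomial claim
  have hK : 4 * s^3 * (p + q) ≤ 8 * s^4 - ε^2 :=
    aux_stmt_0 s (p+q) ε hs0 (by linarith) hkey2
  rw [hb32, le_div_iff₀ hs3pos]
  nlinarith [hK]
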